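/- Let K be a finite field with q elements and odd characteristic, let ν be the 2-adic valuation of q−1, let δ ≥ 1 be an integer with ν ≥ δ+1, and set d = 2^δ. Let K_s be a separable closure of K and let b be an element of multiplicative order 2^{δ+ν} in K_s^*. Then a = b^d lies in K^* and has multiplicative order exactly 2^ν, the field extension K(b)/K has degree d, and (1, b, b², …, b^{d−1}) is a K-basis of K(b). -/

import Mathlib

open Polynomial

private lemma padicValNat_pow_sub_one_aux (q : ℕ) (hq1 : 1 < q) (hq4 : 4 ∣ q - 1)
    (n : ℕ) (hn : n ≠ 0) :
    padicValNat 2 (q ^ n - 1) = padicValNat 2 (q - 1) + padicValNat 2 n := by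
  have h2q : ¬ 2 ∣ q := by omega
  rcases Nat.even_or_odd n with hev | hodd
  · have key := padicValNat.pow_two_sub_pow (x := q) (y := 1) hq1 (by omega) h2q hn hev
    simp only [one_pow] at key
    have hq1v : padicValNat 2 (q + 1) = 1 := by
      obtain ⟨k, hk⟩ := hq4
      have h2 : q + 1 = 2 * (2 * k + 1) := by omega
      rw [h2, padicValNat.mul (by norm_num) (by omega), padicValNat.self one_lt_two,
        padicValNat.eq_zero_of_not_dvd (by omega)]
    omega
  · have hvn : padicValNat 2 n = 0 := padicValNat.eq_zero_of_not_dvd (by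
      rw [Nat.odd_iff] at hodd; omega)
    set s := ∑ i ∈ Finset.range n, q ^ i with hs
    have h1 : 1 ≤ q ^ n := Nat.one_le_pow _ _ (by omega)
    have hkey : (q - 1) * s = q ^ n - 1 := by
      have h2 := geom_sum_mul (q : ℤ) n
      zify [h1, (by omega : 1 ≤ q), hs]
      rw [mul_comm]
      exact h2
    have hsmod : s % 2 = n % 2 := by
      rw [hs, Finset.sum_nat_mod]
      have hc : ∀ i ∈ Finset.range n, q ^ i % 2 = 1 % 2 := by
        intro i _
        have : ¬ 2 ∣ q ^ i := fun h => h2q (Nat.Prime.dvd_of_dvd_pow Nat.prime_two h)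
        omega
      rw [Finset.sum_congr rfl hc]
      simp
    have hsodd : ¬ 2 ∣ s := by rw [Nat.odd_iff] at hodd; omega
    rw [← hkey, padicValNat.mul (by omega) (by omega),
      padicValNat.eq_zero_of_not_dvd hsodd, hvn]

open IntermediateField in
/-- Let `K` be a finite field with `q` elements and odd characteristic, let `ν` be the 2-adic
valuation of `q - 1`, let `δ ≥ 1` with `ν ≥ δ + 1`, and set `d = 2 ^ δ`. If `b` is an element of
multiplicative order `2 ^ (δ + ν)` in the multiplicative group of an algebraic (= separable)
closure `K_s` of `K`, then `a = b ^ d` lies in `K*` and has multiplicative order exactly `2 ^ ν`,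
the extension `K(b)/K` has degree `d`, and `(1, b, b², …, b^(d-1))` is a `K`-basis of `K(b)`. -/
theorem kummer_basis_of_orderOf_two_pow
    {K : Type*} [Field K] [Fintype K] (hchar : Odd (ringChar K))
    (q : ℕ) (hq : q = Fintype.card K)
    (ν : ℕ) (hν : ν = (q - 1).factorization 2)
    (δ : ℕ) (hδ : 1 ≤ δ) (hνδ : δ + 1 ≤ ν)
    (d : ℕ) (hd : d = 2 ^ δ)
    (b : AlgebraicClosure K) (hb : orderOf b = 2 ^ (δ + ν)) :
    (∃ a : K, algebraMap K (AlgebraicClosure K) a = b ^ d ∧ orderOf a = 2 ^ ν) ∧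
      Module.finrank K K⟮b⟯ = d ∧
      ∃ B : Module.Basis (Fin d) K K⟮b⟯, ∀ i : Fin d, (B i : AlgebraicClosure K) = b ^ (i : ℕ) := by
  classical
  have hq1 : 1 < q := by rw [hq]; exact Fintype.one_lt_card
  have hd0 : 0 < d := by rw [hd]; positivity
  -- 2 ^ ν divides q - 1 exactly
  have hq2ν : (2:ℕ) ^ ν ∣ q - 1 := by rw [hν]; exact Nat.ordProj_dvd _ 2
  have hq4 : 4 ∣ q - 1 := by
    have h4 : (4:ℕ) = 2 ^ 2 := by norm_num
    exact h4 ▸ dvd_trans (pow_dvd_pow 2 (by omega)) hq2ν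
  -- b is nonzero
  have hb0 : b ≠ 0 := by
    intro h
    have h1 := pow_orderOf_eq_one b
    rw [hb, h, zero_pow (by positivity)] at h1
    exact zero_ne_one h1
  -- order of b ^ d
  have hc : orderOf (b ^ d) = 2 ^ ν := by
    rw [orderOf_pow' b (by omega : d ≠ 0), hb, hd, Nat.gcd_eq_right (pow_dvd_pow 2 (by omega)),
      Nat.pow_div (by omega) (by norm_num)]
    congr 1
    omega
  have hcq : (b ^ d) ^ (q - 1) = 1 := orderOf_dvd_iff_pow_eq_one.mp (by rw [hc]; exact hq2ν)
  -- b ^ d lies in the image of K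
  have hmem : b ^ d ∈ Set.range (algebraMap K (AlgebraicClosure K)) := by
    by_contra hc'
    have hf0 : (X ^ q - X : (AlgebraicClosure K)[X]) ≠ 0 := FiniteField.X_pow_card_sub_X_ne_zero (AlgebraicClosure K) hq1
    set T : Finset (AlgebraicClosure K) := insert (b ^ d) (Finset.univ.image (algebraMap K (AlgebraicClosure K))) with hT
    have hTcard : T.card = q + 1 := by
      rw [hT, Finset.card_insert_of_notMem, Finset.card_image_of_injective _
        (algebraMap K (AlgebraicClosure K)).injective, Finset.card_univ, ← hq]
      simp only [Finset.mem_image]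
      rintro ⟨k, -, hk⟩
      exact hc' ⟨k, hk⟩
    have hsub : T ⊆ (X ^ q - X : (AlgebraicClosure K)[X]).roots.toFinset := by
      intro x hx
      rw [Multiset.mem_toFinset, mem_roots hf0]
      simp only [IsRoot, eval_sub, eval_pow, eval_X, sub_eq_zero]
      rw [hT, Finset.mem_insert] at hx
      rcases hx with rfl | hx
      · calc (b ^ d) ^ q = (b ^ d) ^ (q - 1) * (b ^ d) := by
              rw [← pow_succ]; congr 1; omega
          _ = b ^ d := by rw [hcq, one_mul]
      · obtain ⟨k, -, rfl⟩ := Finset.mem_image.mp hx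
        rw [← map_pow, hq, FiniteField.pow_card]
    have hle : T.card ≤ q :=
      le_trans (Finset.card_le_card hsub)
        (le_trans (Multiset.toFinset_card_le _)
          (le_trans (Polynomial.card_roots' _)
            (le_of_eq (FiniteField.X_pow_card_sub_X_natDegree_eq (AlgebraicClosure K) hq1))))
    omega
  obtain ⟨a, ha⟩ := hmem
  have haord : orderOf a = 2 ^ ν := by
    have h1 := orderOf_injective (algebraMap K (AlgebraicClosure K)).toMonoidHom (algebraMap K (AlgebraicClosure K)).injective a
    simp only [RingHom.toMonoidHom_eq_coe, MonoidHom.coe_coe] at h1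
    rw [← h1, ha, hc]
  -- b is integral over K
  have hbi : IsIntegral K b := Algebra.IsIntegral.isIntegral b
  -- upper bound on the degree
  have hupper : (minpoly K b).natDegree ≤ d := by
    have hne : (X ^ d - C a : K[X]) ≠ 0 := X_pow_sub_C_ne_zero hd0 a
    have hroot : (Polynomial.aeval b) (X ^ d - C a : K[X]) = 0 := by
      rw [map_sub, map_pow, aeval_X, aeval_C, ha, sub_self]
    have h2 := Polynomial.natDegree_le_natDegree (minpoly.degree_le_of_ne_zero K b hne hroot)
    rwa [natDegree_X_pow_sub_C] at h2
  have hrank : Module.finrank K K⟮b⟯ = (minpoly K b).natDegree := adjoin.finrank hbi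
  haveI hFD := adjoin.finiteDimensional hbi
  haveI : Finite K⟮b⟯ := Module.finite_of_finite K
  haveI : Fintype K⟮b⟯ := Fintype.ofFinite _
  -- lower bound: order of b divides q ^ n - 1
  have hgenmap : algebraMap K⟮b⟯ (AlgebraicClosure K) (AdjoinSimple.gen K b) = b := AdjoinSimple.algebraMap_gen K b
  have hgen0 : AdjoinSimple.gen K b ≠ 0 := by
    intro h
    apply hb0
    rw [← hgenmap, h, map_zero]
  have hgenord : orderOf (AdjoinSimple.gen K b) = 2 ^ (δ + ν) := by
    have h1 := orderOf_injective (algebraMap K⟮b⟯ (AlgebraicClosure K)).toMonoidHom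
      (algebraMap K⟮b⟯ (AlgebraicClosure K)).injective (AdjoinSimple.gen K b)
    simp only [RingHom.toMonoidHom_eq_coe, MonoidHom.coe_coe] at h1
    rw [← h1, hgenmap, hb]
  have hdvd2 : 2 ^ (δ + ν) ∣ Fintype.card K⟮b⟯ - 1 := by
    rw [← hgenord]
    exact orderOf_dvd_of_pow_eq_one (FiniteField.pow_card_sub_one_eq_one _ hgen0)
  rw [Module.card_eq_pow_finrank (K := K), ← hq] at hdvd2
  set n := Module.finrank K K⟮b⟯ with hn
  have hn0 : n ≠ 0 := Module.finrank_pos.ne'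
  have hqn1 : q ^ n - 1 ≠ 0 := by
    have := Nat.one_lt_pow hn0 hq1
    omega
  have hval := padicValNat_pow_sub_one_aux q hq1 hq4 n hn0
  have hle2 : δ + ν ≤ padicValNat 2 (q ^ n - 1) := by
    rw [← Nat.factorization_def _ Nat.prime_two]
    exact (Nat.Prime.pow_dvd_iff_le_factorization Nat.prime_two hqn1).mp hdvd2
  have hν' : padicValNat 2 (q - 1) = ν := by
    rw [hν, Nat.factorization_def _ Nat.prime_two]
  have hδle : δ ≤ padicValNat 2 n := by omega
  have hddvd : d ∣ n := by
    rw [hd]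
    exact dvd_trans (pow_dvd_pow 2 hδle)
      (by rw [← Nat.factorization_def _ Nat.prime_two]; exact Nat.ordProj_dvd n 2)
  have hfinal : n = d :=
    le_antisymm (hrank ▸ hupper) (Nat.le_of_dvd (Nat.pos_of_ne_zero hn0) hddvd)
  refine ⟨⟨a, ha, haord⟩, hfinal, ?_⟩
  let pb := adjoin.powerBasis hbi
  have hdim : pb.dim = d := by rw [← PowerBasis.finrank pb]; exact hfinal
  refine ⟨pb.basis.reindex (finCongr hdim), fun i => ?_⟩
  rw [Module.Basis.reindex_apply, PowerBasis.basis_eq_pow]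
  push_cast
  rw [adjoin.powerBasis_gen]
  simp only [finCongr_symm_apply, Fin.coe_cast]
  norm_cast
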